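/- Every finite pentagonal quasigroup has order congruent to 0 or 1 modulo 5. -/
import Mathlib


/-- A pentagonal quasigroup: a quasigroup (unique left/right division)
satisfying idempotency, mediality and the pentagonal identity. -/
def IsPentagonal {Q : Type*} (m : Q → Q → Q) : Prop :=
  (∀ a b : Q, ∃! x, m a x = b) ∧
  (∀ a b : Q, ∃! x, m x a = b) ∧
  (∀ x, m x x = x) ∧
  (∀ x y z u, m (m x y) (m z u) = m (m x z) (m y u)) ∧
  (∀ x y, m (m (m (m x y) x) y) x = y)

section PentAux

variable {Q : Type*} (m : Q → Q → Q)
variable (idem : ∀ x, m x x = x)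
variable (med : ∀ x y z u, m (m x y) (m z u) = m (m x z) (m y u))
variable (pent : ∀ x y, m (m (m (m x y) x) y) x = y)

include idem med in
/-- Elasticity-type identity: (ab)a = a(ba). -/
lemma pent_elastic : ∀ a b, m (m a b) a = m a (m b a) := by
  intro a b
  calc m (m a b) a = m (m a b) (m a a) := by rw [idem]
    _ = m (m a a) (m b a) := med a b a a
    _ = m a (m b a) := by rw [idem]

include idem med in
/-- a₄ = ((xy)x)y form. -/
lemma pent_a4 : ∀ x y,
    m (m x y) (m y (m x y)) = m (m (m x y) x) y := by
  intro x y
  calc m (m x y) (m y (m x y))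
      = m (m (m x y) y) (m x y) := (pent_elastic m idem med (m x y) y).symm
    _ = m (m (m x y) x) (m y y) := med (m x y) y x y
    _ = m (m (m x y) x) y := by rw [idem]

include idem med pent in
/-- a₅ = x. -/
lemma pent_a5 : ∀ x y,
    m (m y (m x y)) (m (m x y) (m y (m x y))) = x := by
  intro x y
  calc m (m y (m x y)) (m (m x y) (m y (m x y)))
      = m (m y (m x y)) (m (m (m x y) y) (m x y)) := by
        rw [pent_elastic m idem med (m x y) y]
    _ = m (m y (m (m x y) y)) (m (m x y) (m x y)) := med y (m x y) (m (m x y) y) (m x y)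
    _ = m (m y (m (m x y) y)) (m x y) := by rw [idem]
    _ = m (m (m y (m x y)) y) (m x y) := by rw [pent_elastic m idem med y (m x y)]
    _ = m (m (m (m y x) y) y) (m x y) := by rw [pent_elastic m idem med y x]
    _ = m (m (m (m y x) y) x) (m y y) := med (m (m y x) y) y x y
    _ = m (m (m (m y x) y) x) y := by rw [idem]
    _ = x := pent y x

include idem med pent in
/-- a₆ = y. -/
lemma pent_a6 : ∀ x y,
    m (m (m x y) (m y (m x y))) x = y := by
  intro x y
  rw [pent_a4 m idem med]
  exact pent x y

end PentAux

theorem pentagonal_order_mod_five (Q : Type*) [Fintype Q] (m : Q → Q → Q)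
    (h : IsPentagonal m) :
    Fintype.card Q % 5 = 0 ∨ Fintype.card Q % 5 = 1 := by
  classical
  obtain ⟨hl, hr, idem, med, pent⟩ := h
  set n := Fintype.card Q with hn
  -- the set of ordered pairs of distinct elements
  set S := {p : Q × Q // p.1 ≠ p.2} with hS
  -- the map F(x,y) = (y, m x y)
  have hne : ∀ p : S, (p : Q × Q).2 ≠ m (p : Q × Q).1 (p : Q × Q).2 := by
    rintro ⟨⟨x, y⟩, hxy⟩ hEq
    apply hxy
    obtain ⟨z, hz, huniq⟩ := hr y y
    have h1 : x = z := huniq x hEq.symm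
    have h2 : y = z := huniq y (idem y)
    simp only [h1, h2]
  let F : S → S := fun p => ⟨((p : Q × Q).2, m (p : Q × Q).1 (p : Q × Q).2), hne p⟩
  have F5 : ∀ s : S, F (F (F (F (F s)))) = s := by
    rintro ⟨⟨x, y⟩, hxy⟩
    apply Subtype.ext
    show (_, _) = (x, y)
    have h5 := pent_a5 m idem med pent x y
    have h6 := pent_a6 m idem med pent x y
    simp only [F]
    rw [h5, h6]
  let σ : Equiv.Perm S :=
    ⟨F, fun s => F (F (F (F s))), fun s => F5 s, fun s => F5 s⟩
  have hσ5 : σ ^ 5 = 1 := by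
    apply Equiv.ext
    intro s
    show (σ ^ 5) s = s
    have : (σ ^ 5) s = σ (σ (σ (σ (σ s)))) := by
      simp [pow_succ, Equiv.Perm.mul_apply]
    rw [this]
    exact F5 s
    
  have hpow : ∀ k : ℕ, σ ^ (k % 5) = σ ^ k := by
    intro k
    conv_rhs => rw [← Nat.div_add_mod k 5]
    rw [pow_add, pow_mul, hσ5, one_pow, one_mul]
  -- ZMod 5 action on S
  letI : MulAction (Multiplicative (ZMod 5)) S :=
    { smul := fun g s => (σ ^ (g.toAdd.val)) s
      one_smul := fun s => by
        show (σ ^ ((1 : Multiplicative (ZMod 5)).toAdd.val)) s = s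
        norm_num
      mul_smul := fun g h s => by
        show (σ ^ ((g * h).toAdd.val)) s = (σ ^ g.toAdd.val) ((σ ^ h.toAdd.val) s)
        have : (g * h).toAdd = g.toAdd + h.toAdd := rfl
        rw [this, ZMod.val_add, hpow, pow_add, Equiv.Perm.mul_apply] }
  have hsmul : ∀ (g : Multiplicative (ZMod 5)) (s : S), g • s = (σ ^ (g.toAdd.val)) s :=
    fun _ _ => rfl
  have hPG : IsPGroup 5 (Multiplicative (ZMod 5)) := by
    apply IsPGroup.of_card (n := 1)
    simp [Nat.card_eq_fintype_card]
  haveI : Fact (Nat.Prime 5) := ⟨by norm_num⟩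
  have hmod := hPG.card_modEq_card_fixedPoints S
  -- no fixed points
  have hfix : IsEmpty (MulAction.fixedPoints (Multiplicative (ZMod 5)) S) := by
    constructor
    rintro ⟨s, hs⟩
    have h1 := hs (Multiplicative.ofAdd (1 : ZMod 5))
    rw [hsmul] at h1
    have hval : ((Multiplicative.ofAdd (1 : ZMod 5)).toAdd).val = 1 := rfl
    rw [hval, pow_one] at h1
    have h2 : σ s = F s := rfl
    rw [h2] at h1
    have h3 := congrArg (fun t : S => (t : Q × Q).1) h1
    obtain ⟨⟨x, y⟩, hxy⟩ := s
    have h4 : y = x := by simpa [F] using h3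
    exact hxy h4.symm
  have hfix0 : Nat.card (MulAction.fixedPoints (Multiplicative (ZMod 5)) S) = 0 :=
    Nat.card_of_isEmpty
  rw [hfix0] at hmod
  have hdvd : 5 ∣ Nat.card S := (Nat.modEq_zero_iff_dvd).mp hmod
  -- compute card S
  have hcardS : Nat.card S = n * n - n := by
    rw [Nat.card_eq_fintype_card]
    have h1 : Fintype.card S = Fintype.card (Q × Q) - Fintype.card {p : Q × Q // p.1 = p.2} := by
      exact Fintype.card_subtype_compl _
    have h2 : Fintype.card {p : Q × Q // p.1 = p.2} = n := by
      rw [hn]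
      exact Fintype.card_congr ⟨fun s => s.1.1, fun q => ⟨(q, q), rfl⟩,
        fun s => by obtain ⟨⟨a, b⟩, hab⟩ := s; cases hab; rfl, fun q => rfl⟩
    rw [h1, h2, Fintype.card_prod, hn]
  rw [hcardS] at hdvd
  rcases Nat.eq_zero_or_pos n with h0 | hpos
  · left; omega
  · obtain ⟨k, hk⟩ : ∃ k, n = k + 1 := ⟨n - 1, by omega⟩
    have : n * n - n = n * k := by rw [hk]; ring_nf; omega
    rw [this] at hdvd
    rcases (Nat.Prime.dvd_mul (by norm_num)).mp hdvd with h5 | h5 <;> omega
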